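/- Let G and H be complex Hilbert spaces, let A : H → G, B : G → H, C : H → G, D : H → H, E : H → H be bounded linear operators, and let M ≥ 1. Assume: (a) ‖A‖ ≤ M, ‖B‖ ≤ M, ‖C‖ ≤ M, ‖D‖ ≤ M, ‖E‖ ≤ M; (b) Id_H + D∘E∘D has a bounded two-sided inverse with ‖(Id_H + D∘E∘D)⁻¹‖ ≤ M; (c) ε := ‖D∘(B∘C − E)∘D‖ ≤ 1/(2M). Then Id_G + C∘D²∘B has a bounded two-sided inverse, ‖(Id_G + C∘D²∘B)⁻¹‖ ≤ 3M⁵, and ‖A∘D²∘B∘(Id_G + C∘D²∘B)⁻¹ − A∘D∘(Id_H + D∘E∘D)⁻¹∘D∘B‖ ≤ 2M⁶ε. -/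

import Mathlib

open ContinuousLinearMap

lemma aux_shift {G H : Type*} [NormedAddCommGroup G] [NormedSpace ℂ G]
    [NormedAddCommGroup H] [NormedSpace ℂ H]
    (P : H →L[ℂ] G) (Q : G →L[ℂ] H) (L : H →L[ℂ] H)
    (h1 : (1 + Q ∘L P) ∘L L = 1) (h2 : L ∘L (1 + Q ∘L P) = 1) :
    (1 + P ∘L Q) ∘L (1 - P ∘L (L ∘L Q)) = 1 ∧
    (1 - P ∘L (L ∘L Q)) ∘L (1 + P ∘L Q) = 1 := by
  constructor
  · ext x
    have h1' := DFunLike.congr_fun h1 (Q x)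
    simp only [comp_apply, add_apply, one_apply_eq_self] at h1' ⊢
    simp only [sub_apply, comp_apply, one_apply_eq_self, map_add, map_sub]
    have key : P (L (Q x)) + P (Q (P (L (Q x)))) = P (Q x) := by
      rw [← map_add, h1']
    rw [← key]; abel
  · ext x
    have h2' := DFunLike.congr_fun h2 (Q x)
    simp only [comp_apply, add_apply, one_apply_eq_self] at h2' ⊢
    simp only [sub_apply, comp_apply, one_apply_eq_self]
    rw [map_add Q, h2']
    abel

set_option maxHeartbeats 1000000

theorem stmt0
    {G H : Type*} [NormedAddCommGroup G] [InnerProductSpace ℂ G] [CompleteSpace G]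
    [NormedAddCommGroup H] [InnerProductSpace ℂ H] [CompleteSpace H]
    (A : H →L[ℂ] G) (B : G →L[ℂ] H) (C : H →L[ℂ] G) (D E : H →L[ℂ] H)
    (M : ℝ) (hM : 1 ≤ M)
    (hA : ‖A‖ ≤ M) (hB : ‖B‖ ≤ M) (hC : ‖C‖ ≤ M) (hD : ‖D‖ ≤ M) (hE : ‖E‖ ≤ M)
    (J : H →L[ℂ] H)
    (hJl : (1 + D ∘L E ∘L D) ∘L J = 1) (hJr : J ∘L (1 + D ∘L E ∘L D) = 1)
    (hJnorm : ‖J‖ ≤ M)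
    (hsmall : ‖D ∘L (B ∘L C - E) ∘L D‖ ≤ 1 / (2 * M)) :
    ∃ K : G →L[ℂ] G,
      (1 + C ∘L (D ∘L D) ∘L B) ∘L K = 1 ∧
      K ∘L (1 + C ∘L (D ∘L D) ∘L B) = 1 ∧
      ‖K‖ ≤ 3 * M ^ 5 ∧
      ‖(A ∘L (D ∘L D) ∘L B) ∘L K - (A ∘L D) ∘L J ∘L (D ∘L B)‖ ≤
        2 * M ^ 6 * ‖D ∘L (B ∘L C - E) ∘L D‖ := by
  have hM0 : (0 : ℝ) < M := lt_of_lt_of_le zero_lt_one hM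
  set S : H →L[ℂ] H := D ∘L (B ∘L C - E) ∘L D with hS
  -- ring versions of hypotheses
  have hJl' : (1 + D * (E * D)) * J = 1 := hJl
  have hJr' : J * (1 + D * (E * D)) = 1 := hJr
  have hSnorm : ‖S‖ ≤ 1 / (2 * M) := hsmall
  have hS0 : (0 : ℝ) ≤ ‖S‖ := norm_nonneg _
  have hT : ‖J * S‖ ≤ 1 / 2 := by
    calc ‖J * S‖ ≤ ‖J‖ * ‖S‖ := norm_mul_le _ _
      _ ≤ M * (1 / (2 * M)) :=
        mul_le_mul hJnorm hSnorm hS0 (le_of_lt hM0)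
      _ = 1 / 2 := by field_simp
  have hT1 : ‖-(J * S)‖ < 1 := by rw [norm_neg]; linarith
  set u : (H →L[ℂ] H)ˣ := Units.oneSub (-(J * S)) hT1 with hu
  have huval : (u : H →L[ℂ] H) = 1 + J * S := by
    show 1 - -(J * S) = 1 + J * S
    rw [sub_neg_eq_add]
  have huinv : ‖u.inv‖ ≤ 2 := by
    have h1 : ‖(1 : H →L[ℂ] H)‖ ≤ 1 := by
      rw [ContinuousLinearMap.one_def]; exact norm_id_le
    have h2 : ‖u.inv‖ ≤ ‖(1 : H →L[ℂ] H)‖ - 1 + (1 - ‖-(J * S)‖)⁻¹ := by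
      show ‖∑' n : ℕ, (-(J * S)) ^ n‖ ≤ _
      exact tsum_geometric_le_of_norm_lt_one _ hT1
    have h3 : (1 - ‖-(J * S)‖)⁻¹ ≤ 2 := by
      rw [norm_neg]
      rw [show (2 : ℝ) = ((1:ℝ)/2)⁻¹ by norm_num]
      apply inv_anti₀ (by norm_num)
      linarith
    linarith
  -- factorization
  have hQP : (D ∘L B) ∘L (C ∘L D) = D * ((B ∘L C) * D) := by
    ext x; simp [mul_def]
  have hSring : S = D * (((B ∘L C) - E) * D) := rfl
  have hfact : (1 + D * (E * D)) * (u : H →L[ℂ] H)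
      = 1 + (D ∘L B) ∘L (C ∘L D) := by
    rw [huval, hQP]
    calc (1 + D * (E * D)) * (1 + J * S)
        = 1 + D * (E * D) + ((1 + D * (E * D)) * J) * S := by noncomm_ring
      _ = 1 + D * (E * D) + S := by rw [hJl', one_mul]
      _ = 1 + D * ((B ∘L C) * D) := by rw [hSring]; noncomm_ring
  set Lop : H →L[ℂ] H := u.inv * J with hLop
  have hL1 : (1 + (D ∘L B) ∘L (C ∘L D)) ∘L Lop = 1 := by
    show (1 + (D ∘L B) ∘L (C ∘L D)) * (u.inv * J) = 1
    rw [← hfact, mul_assoc, ← mul_assoc (u : H →L[ℂ] H), u.val_inv, one_mul, hJl']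
  have hL2 : Lop ∘L (1 + (D ∘L B) ∘L (C ∘L D)) = 1 := by
    show (u.inv * J) * (1 + (D ∘L B) ∘L (C ∘L D)) = 1
    rw [← hfact, mul_assoc, ← mul_assoc J, hJr', one_mul, u.inv_val]
  have hLnorm : ‖Lop‖ ≤ 2 * M := by
    calc ‖Lop‖ ≤ ‖u.inv‖ * ‖J‖ := norm_mul_le _ _
      _ ≤ 2 * M := mul_le_mul huinv hJnorm (norm_nonneg _) (by norm_num)
  -- the inverse K
  set P : H →L[ℂ] G := C ∘L D with hP
  set Q : G →L[ℂ] H := D ∘L B with hQ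
  obtain ⟨hK1, hK2⟩ := aux_shift P Q Lop hL1 hL2
  have hassocC : C ∘L (D ∘L D) ∘L B = P ∘L Q := by ext x; simp [hP, hQ]
  refine ⟨1 - P ∘L (Lop ∘L Q), ?_, ?_, ?_, ?_⟩
  · rw [hassocC]; exact hK1
  · rw [hassocC]; exact hK2
  · -- norm of K
    have hPn : ‖P‖ ≤ M * M :=
      (opNorm_comp_le _ _).trans (mul_le_mul hC hD (norm_nonneg _) hM0.le)
    have hQn : ‖Q‖ ≤ M * M :=
      (opNorm_comp_le _ _).trans (mul_le_mul hD hB (norm_nonneg _) hM0.le)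
    have hLQ : ‖Lop ∘L Q‖ ≤ 2 * M * (M * M) :=
      (opNorm_comp_le _ _).trans
        (mul_le_mul hLnorm hQn (norm_nonneg _) (by positivity))
    have hPLQ : ‖P ∘L (Lop ∘L Q)‖ ≤ M * M * (2 * M * (M * M)) :=
      (opNorm_comp_le _ _).trans
        (mul_le_mul hPn hLQ (norm_nonneg _) (by positivity))
    have h1 : ‖(1 : G →L[ℂ] G)‖ ≤ 1 := by
      rw [ContinuousLinearMap.one_def]; exact norm_id_le
    have hM5 : (1 : ℝ) ≤ M ^ 5 := one_le_pow₀ hM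
    calc ‖1 - P ∘L (Lop ∘L Q)‖ ≤ ‖(1 : G →L[ℂ] G)‖ + ‖P ∘L (Lop ∘L Q)‖ := norm_sub_le _ _
      _ ≤ 1 + M * M * (2 * M * (M * M)) := add_le_add h1 hPLQ
      _ ≤ 3 * M ^ 5 := by nlinarith [hM5]
  · -- the key identity
    have hKey : (A ∘L (D ∘L D) ∘L B) ∘L (1 - P ∘L (Lop ∘L Q))
        = (A ∘L D) ∘L (Lop ∘L Q) := by
      ext x
      have h := DFunLike.congr_fun hL1 (D (B x))
      simp only [comp_apply, add_apply, one_apply_eq_self, hP, hQ] at h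
      simp only [comp_apply, sub_apply, one_apply_eq_self, hP, hQ, map_sub]
      have h2 : D (B (C (D (Lop (D (B x)))))) = D (B x) - Lop (D (B x)) :=
        eq_sub_of_add_eq' h
      rw [h2]
      simp only [map_sub]
      abel
    have hdiff : Lop - J = -(Lop * (S * J)) := by
      have e1 : Lop * ((1 + D * (E * D)) * J) = Lop := by rw [hJl', mul_one]
      have e2 : (Lop ∘L (1 + (D ∘L B) ∘L (C ∘L D))) * J = J := by rw [hL2, one_mul]
      calc Lop - J
          = Lop * ((1 + D * (E * D)) * J)
            - (Lop ∘L (1 + (D ∘L B) ∘L (C ∘L D))) * J := by rw [e1, e2]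
        _ = Lop * ((1 + D * (E * D)) * J)
            - (Lop * (1 + D * ((B ∘L C) * D))) * J := by rw [show (Lop ∘L (1 + (D ∘L B) ∘L (C ∘L D))) = Lop * (1 + D * ((B ∘L C) * D)) from by rw [← hQP]; rfl]
        _ = -(Lop * (S * J)) := by rw [hSring]; noncomm_ring
    have hsplit : (A ∘L (D ∘L D) ∘L B) ∘L (1 - P ∘L (Lop ∘L Q)) - (A ∘L D) ∘L J ∘L (D ∘L B)
        = (A ∘L D) ∘L ((Lop - J) ∘L Q) := by
      rw [hKey, sub_comp, comp_sub]
    rw [hsplit, hdiff]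
    have hADn : ‖A ∘L D‖ ≤ M * M :=
      (opNorm_comp_le _ _).trans (mul_le_mul hA hD (norm_nonneg _) hM0.le)
    have hQn : ‖Q‖ ≤ M * M :=
      (opNorm_comp_le _ _).trans (mul_le_mul hD hB (norm_nonneg _) hM0.le)
    have hSJ : ‖S * J‖ ≤ ‖S‖ * M :=
      (norm_mul_le _ _).trans (mul_le_mul le_rfl hJnorm (norm_nonneg _) hS0)
    have hLSJ : ‖Lop * (S * J)‖ ≤ 2 * M * (‖S‖ * M) :=
      (norm_mul_le _ _).trans
        (mul_le_mul hLnorm hSJ (norm_nonneg _) (by positivity))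
    have hmid : ‖(-(Lop * (S * J))) ∘L Q‖ ≤ 2 * M * (‖S‖ * M) * (M * M) := by
      refine (opNorm_comp_le _ _).trans ?_
      rw [norm_neg]
      exact mul_le_mul hLSJ hQn (norm_nonneg _) (by positivity)
    calc ‖(A ∘L D) ∘L ((-(Lop * (S * J))) ∘L Q)‖
        ≤ ‖A ∘L D‖ * ‖(-(Lop * (S * J))) ∘L Q‖ := opNorm_comp_le _ _
      _ ≤ M * M * (2 * M * (‖S‖ * M) * (M * M)) :=
        mul_le_mul hADn hmid (norm_nonneg _) (by positivity)
      _ = 2 * M ^ 6 * ‖S‖ := by ring
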